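/- Let W₁(t), …, W_L(t) be differentiable matrix-valued curves satisfying the gradient flow Ẇ_i(t) = −∂ℓ/∂W_i evaluated at (W_L(t)⋯W_1(t)) via the chain rule, i.e., Ẇ_i = −(W_L⋯W_{i+1})ᵀ G (W_{i−1}⋯W_1)ᵀ where G = ∂ℓ/∂Π at Π = W_L⋯W_1. If at time 0 the balancedness condition W_i(0) W_i(0)ᵀ = W_{i+1}(0)ᵀ W_{i+1}(0) holds for all i ∈ {1,…,L−1}, then this condition holds for all t ≥ 0. -/

import Mathlib

open Matrix

/-- The product `W b * W (b-1) * ⋯ * W (a+1)` of a family of square matrices,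
taken with indices descending from `b - 1` down to `a` (so
`descProd W a b = W (b-1) * ⋯ * W a`). -/
def descProd (n : ℕ) (W : ℕ → Matrix (Fin n) (Fin n) ℝ) (a b : ℕ) :
    Matrix (Fin n) (Fin n) ℝ :=
  (((List.range' a (b - a)).reverse).map W).prod


lemma descProd_concat (n : ℕ) (W : ℕ → Matrix (Fin n) (Fin n) ℝ) (a b : ℕ) (h : a ≤ b) :
    descProd n W a (b + 1) = W b * descProd n W a b := by
  unfold descProd
  have h1 : b + 1 - a = (b - a) + 1 := by omega
  have h2 : a + 1 * (b - a) = b := by omega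
  rw [h1, List.range'_concat, h2]
  simp

lemma descProd_cons (n : ℕ) (W : ℕ → Matrix (Fin n) (Fin n) ℝ) (a b : ℕ) (h : a < b) :
    descProd n W a b = descProd n W (a + 1) b * W a := by
  unfold descProd
  have h1 : b - a = (b - (a + 1)) + 1 := by omega
  rw [h1, List.range'_succ]
  simp

/-- Balancedness is preserved under the gradient flow of a deep linear network:
if `Ẇᵢ = −(W_L⋯W_{i+1})ᵀ G (W_{i−1}⋯W_1)ᵀ` (with `G(t)` the loss gradient with
respect to the product) and `Wᵢ(0)Wᵢ(0)ᵀ = W_{i+1}(0)ᵀW_{i+1}(0)` for all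
`1 ≤ i < L`, then the same holds at every `t ≥ 0`.  Layers are indexed `1,…,L`. -/
theorem stmt10 (n L : ℕ) (hL : 1 ≤ L)
    (W : ℕ → ℝ → Matrix (Fin n) (Fin n) ℝ)
    (G : ℝ → Matrix (Fin n) (Fin n) ℝ) (hG : ∀ a b, Continuous fun t => G t a b)
    (hdiff : ∀ i a b, Differentiable ℝ fun t => W i t a b)
    (hflow : ∀ i, 1 ≤ i → i ≤ L → ∀ t (a b : Fin n),
      deriv (fun s => W i s a b) t =
        (-((descProd n (fun j => W j t) (i + 1) (L + 1))ᵀ * G t *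
            (descProd n (fun j => W j t) 1 i)ᵀ)) a b)
    (hbal0 : ∀ i, 1 ≤ i → i < L →
      W i 0 * (W i 0)ᵀ = (W (i + 1) 0)ᵀ * W (i + 1) 0) :
    ∀ t : ℝ, 0 ≤ t → ∀ i, 1 ≤ i → i < L →
      W i t * (W i t)ᵀ = (W (i + 1) t)ᵀ * W (i + 1) t := by
  intro t _ i h1 hiL
  -- derivative matrices
  set Wd : ℕ → ℝ → Matrix (Fin n) (Fin n) ℝ := fun j s =>
    -((descProd n (fun k => W k s) (j + 1) (L + 1))ᵀ * G s *
        (descProd n (fun k => W k s) 1 j)ᵀ) with hWd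
  have hderiv : ∀ j, 1 ≤ j → j ≤ L → ∀ s (a b : Fin n),
      HasDerivAt (fun u => W j u a b) (Wd j s a b) s := by
    intro j hj1 hjL s a b
    have := (hdiff j a b s).hasDerivAt
    rwa [hflow j hj1 hjL s a b] at this
  -- key matrix identity
  have key : ∀ s, Wd i s * (W i s)ᵀ = (W (i + 1) s)ᵀ * Wd (i + 1) s := by
    intro s
    have e1 : descProd n (fun k => W k s) 1 (i + 1) =
        W i s * descProd n (fun k => W k s) 1 i :=
      descProd_concat n _ 1 i h1
    have e2 : descProd n (fun k => W k s) (i + 1) (L + 1) =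
        descProd n (fun k => W k s) (i + 1 + 1) (L + 1) * W (i + 1) s :=
      descProd_cons n _ (i + 1) (L + 1) (by omega)
    simp only [hWd, e1, e2, Matrix.transpose_mul, Matrix.neg_mul, Matrix.mul_neg,
      Matrix.mul_assoc]
  have keyT : ∀ s, W i s * (Wd i s)ᵀ = (Wd (i + 1) s)ᵀ * W (i + 1) s := by
    intro s
    have := congrArg Matrix.transpose (key s)
    simpa [Matrix.transpose_mul] using this
  -- entrywise constancy
  have hconst : ∀ a b : Fin n,
      (W i t * (W i t)ᵀ - (W (i + 1) t)ᵀ * W (i + 1) t) a b =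
      (W i 0 * (W i 0)ᵀ - (W (i + 1) 0)ᵀ * W (i + 1) 0) a b := by
    intro a b
    set g : ℝ → ℝ := fun s =>
      (W i s * (W i s)ᵀ - (W (i + 1) s)ᵀ * W (i + 1) s) a b with hg
    have hgd : ∀ s, HasDerivAt g 0 s := by
      intro s
      have H1 : HasDerivAt (fun u => (W i u * (W i u)ᵀ) a b)
          ((Wd i s * (W i s)ᵀ + W i s * (Wd i s)ᵀ) a b) s := by
        have : HasDerivAt (fun u => ∑ c, W i u a c * W i u b c)
            (∑ c, (Wd i s a c * W i s b c + W i s a c * Wd i s b c)) s :=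
          HasDerivAt.fun_sum fun c _ =>
            (hderiv i h1 (by omega) s a c).mul (hderiv i h1 (by omega) s b c)
        simp only [Matrix.mul_apply, Matrix.add_apply, Matrix.transpose_apply,
          Finset.sum_add_distrib]
        simpa [Finset.sum_add_distrib] using this
      have H2 : HasDerivAt (fun u => ((W (i + 1) u)ᵀ * W (i + 1) u) a b)
          (((Wd (i + 1) s)ᵀ * W (i + 1) s + (W (i + 1) s)ᵀ * Wd (i + 1) s) a b) s := by
        have : HasDerivAt (fun u => ∑ c, W (i + 1) u c a * W (i + 1) u c b)
            (∑ c, (Wd (i + 1) s c a * W (i + 1) s c b +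
              W (i + 1) s c a * Wd (i + 1) s c b)) s :=
          HasDerivAt.fun_sum fun c _ =>
            (hderiv (i + 1) (by omega) (by omega) s c a).mul
              (hderiv (i + 1) (by omega) (by omega) s c b)
        simp only [Matrix.mul_apply, Matrix.add_apply, Matrix.transpose_apply,
          Finset.sum_add_distrib]
        simpa [Finset.sum_add_distrib] using this
      have := H1.fun_sub H2
      have hz : (Wd i s * (W i s)ᵀ + W i s * (Wd i s)ᵀ) a b -
          ((Wd (i + 1) s)ᵀ * W (i + 1) s + (W (i + 1) s)ᵀ * Wd (i + 1) s) a b = 0 := by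
        rw [key s, keyT s]; ring_nf
        simp [Matrix.add_apply, add_comm]
      rw [hz] at this
      simpa [hg, Matrix.sub_apply] using this
    have hgdiff : Differentiable ℝ g := fun s => (hgd s).differentiableAt
    have := is_const_of_deriv_eq_zero hgdiff (fun s => (hgd s).deriv) t 0
    simpa [hg, Matrix.sub_apply] using this
  have hb0 := hbal0 i h1 hiL
  ext a b
  have := hconst a b
  rw [hb0] at this
  simp only [Matrix.sub_apply, sub_self] at this
  linarith [this]
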